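/- For an element f ∈ R and an index i ∈ {1,…,s}, the following conditions are equivalent: (a) f is a separator for m_i; (b) Ann_R(f) = m_i; (c) f is a non-zero element of the ideal (q_i :_R m_i) · ∏_{j≠i} q_j; (d) the image of f in R/q_i is a non-zero element of the socle Ann_{R/q_i}(m_i/q_i), and the image of f in R/q_j is zero for every j ≠ i. -/

import Mathlib

open MvPolynomial

set_option synthInstance.maxHeartbeats 1000000
set_option maxHeartbeats 1000000

namespace CB

variable (K : Type*) [Field K] {n : ℕ}

/-- The degree filtration `F_iR` on `R = P/I`: the image in `R` of the polynomials
of total degree at most `i` (together with `0`), and `{0}` for `i < 0`. -/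
noncomputable def degFil (I : Ideal (MvPolynomial (Fin n) K)) (i : ℤ) :
    Submodule K (MvPolynomial (Fin n) K ⧸ I) :=
  if 0 ≤ i then
    Submodule.map (Ideal.Quotient.mkₐ K I).toLinearMap
      (restrictTotalDegree (Fin n) K i.toNat)
  else ⊥

/-- The affine Hilbert function `HF^a_R(i) = dim_K F_iR`. -/
noncomputable def aHF (I : Ideal (MvPolynomial (Fin n) K)) (i : ℤ) : ℕ :=
  Module.finrank K (degFil K I i)

/-- The regularity index `ri(R)`: the smallest `i` with `HF^a_R(i) = dim_K R`. -/
noncomputable def ri (I : Ideal (MvPolynomial (Fin n) K)) : ℤ :=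
  sInf {i : ℤ | aHF K I i = Module.finrank K (MvPolynomial (Fin n) K ⧸ I)}

/-- The order `ord_F(f)` of an element of `R`. -/
noncomputable def ordF (I : Ideal (MvPolynomial (Fin n) K))
    (f : MvPolynomial (Fin n) K ⧸ I) : ℤ :=
  sInf {i : ℤ | f ∈ degFil K I i}

/-- The action of `R` on the canonical module `ω_R = Hom_K(R,K)`:
`(f · φ)(g) = φ(f * g)`. -/
noncomputable def dAct (I : Ideal (MvPolynomial (Fin n) K))
    (f : MvPolynomial (Fin n) K ⧸ I)
    (φ : Module.Dual K (MvPolynomial (Fin n) K ⧸ I)) :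
    Module.Dual K (MvPolynomial (Fin n) K ⧸ I) :=
  φ.comp (LinearMap.mulLeft K f)

/-- The degree filtration `G_iω_R = {φ : φ(F_{-i-1}R) = 0}` on the canonical module. -/
noncomputable def Gfil (I : Ideal (MvPolynomial (Fin n) K)) (i : ℤ) :
    Submodule K (Module.Dual K (MvPolynomial (Fin n) K ⧸ I)) :=
  Submodule.dualAnnihilator (degFil K I (-i - 1))

/-- The order `ord_G(φ)` of an element of `ω_R`. -/
noncomputable def ordG (I : Ideal (MvPolynomial (Fin n) K))
    (φ : Module.Dual K (MvPolynomial (Fin n) K ⧸ I)) : ℤ :=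
  sInf {i : ℤ | φ ∈ Gfil K I i}

/-- `Q : Fin s → Ideal P` is the (minimal) primary decomposition of `I`. -/
def IsPrimaryDecomp (I : Ideal (MvPolynomial (Fin n) K)) {s : ℕ}
    (Q : Fin s → Ideal (MvPolynomial (Fin n) K)) : Prop :=
  (∀ i, (Q i).IsPrimary) ∧ I = ⨅ i, Q i ∧
    Function.Injective fun i => (Q i).radical

/-- The image `q_j` of the primary component `Q_j` in `R`. -/
noncomputable def qR (I : Ideal (MvPolynomial (Fin n) K)) {s : ℕ}
    (Q : Fin s → Ideal (MvPolynomial (Fin n) K)) (j : Fin s) :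
    Ideal (MvPolynomial (Fin n) K ⧸ I) :=
  (Q j).map (Ideal.Quotient.mk I)

/-- The image `m_j` of the maximal component `M_j = Rad(Q_j)` in `R`. -/
noncomputable def mR (I : Ideal (MvPolynomial (Fin n) K)) {s : ℕ}
    (Q : Fin s → Ideal (MvPolynomial (Fin n) K)) (j : Fin s) :
    Ideal (MvPolynomial (Fin n) K ⧸ I) :=
  ((Q j).radical).map (Ideal.Quotient.mk I)

/-- `ℓ_i = dim_K (P / M_i)`. -/
noncomputable def ell {s : ℕ} (Q : Fin s → Ideal (MvPolynomial (Fin n) K)) (i : Fin s) : ℕ :=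
  Module.finrank K (MvPolynomial (Fin n) K ⧸ (Q i).radical)

/-- `f ∈ R` is a separator for `m_i`: `dim_K⟨f⟩ = dim_K(R/m_i)` and `f ∈ q_j` for `j ≠ i`. -/
def IsSeparator (I : Ideal (MvPolynomial (Fin n) K)) {s : ℕ}
    (Q : Fin s → Ideal (MvPolynomial (Fin n) K)) (i : Fin s)
    (f : MvPolynomial (Fin n) K ⧸ I) : Prop :=
  Module.finrank K ((Ideal.span {f}).restrictScalars K)
      = Module.finrank K ((MvPolynomial (Fin n) K ⧸ I) ⧸ mR K I Q i) ∧
    ∀ j, j ≠ i → f ∈ qR K I Q j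

/-- `J` is a `Q_i`-divisor of `I`. -/
def IsQiDivisor (I : Ideal (MvPolynomial (Fin n) K)) {s : ℕ}
    (Q : Fin s → Ideal (MvPolynomial (Fin n) K)) (i : Fin s)
    (J : Ideal (MvPolynomial (Fin n) K)) : Prop :=
  ∃ Q' : Ideal (MvPolynomial (Fin n) K),
    Q i < Q' ∧ Q' ≤ (Q i).radical ∧ J = ⨅ j, if j = i then Q' else Q j

/-- The image `J̄` of an ideal `J ⊇ I` in `R`, as a `K`-vector subspace; its dimension
is `dim_K (J/I)`. -/
noncomputable def resIm (I J : Ideal (MvPolynomial (Fin n) K)) :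
    Submodule K (MvPolynomial (Fin n) K ⧸ I) :=
  (J.map (Ideal.Quotient.mk I)).restrictScalars K

/-- `J` is a minimal `Q_i`-divisor of `I`: a `Q_i`-divisor with `dim_K(J/I) = ℓ_i`. -/
def IsMinQiDivisor (I : Ideal (MvPolynomial (Fin n) K)) {s : ℕ}
    (Q : Fin s → Ideal (MvPolynomial (Fin n) K)) (i : Fin s)
    (J : Ideal (MvPolynomial (Fin n) K)) : Prop :=
  IsQiDivisor K I Q i J ∧ Module.finrank K (resIm K I J) = ell K Q i

/-- `ri(J̄) = max { ord_F(f) : f ∈ J̄ \ {0} }`. -/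
noncomputable def riBar (I J : Ideal (MvPolynomial (Fin n) K)) : ℤ :=
  sSup {d : ℤ | ∃ f ∈ resIm K I J, f ≠ 0 ∧ ordF K I f = d}

/-- The separator degree `sepdeg(m_i) = min { ri(J̄) : J a minimal Q_i-divisor of I }`. -/
noncomputable def sepdeg (I : Ideal (MvPolynomial (Fin n) K)) {s : ℕ}
    (Q : Fin s → Ideal (MvPolynomial (Fin n) K)) (i : Fin s) : ℤ :=
  sInf {d : ℤ | ∃ J, IsMinQiDivisor K I Q i J ∧ riBar K I J = d}

/-- `R = P/I` has the Cayley–Bacharach property: `sepdeg(m_i) = ri(R)` for all maximal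
ideals `m_i`, where the `m_i` come from the primary decomposition of `I`. -/
def hasCBP (I : Ideal (MvPolynomial (Fin n) K)) : Prop :=
  ∀ (s : ℕ) (Q : Fin s → Ideal (MvPolynomial (Fin n) K)),
    IsPrimaryDecomp K I Q → ∀ i, sepdeg K I Q i = ri K I

/-- The socle of a ring `A` with respect to an ideal `m`: `Ann_A(m)`. -/
noncomputable def socle (A : Type*) [CommRing A] (m : Ideal A) : Ideal A :=
  Submodule.colon (⊥ : Ideal A) (m : Set A)

theorem socle_isTorsionBySet (A : Type*) [CommRing A] (m : Ideal A) :
    Module.IsTorsionBySet A (socle A m) m := by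
  intro x a
  have h : (x : A) • (a : A) ∈ (⊥ : Ideal A) :=
    Submodule.mem_colon.mp x.2 (a : A) a.2
  apply Subtype.ext
  have : (a : A) * (x : A) = 0 := by
    simpa [smul_eq_mul, mul_comm] using h
  simpa [smul_eq_mul] using this

/-- The socle, viewed as a vector space over the residue field `A/m`. -/
noncomputable def socleModule (A : Type*) [CommRing A] (m : Ideal A) :
    Module (A ⧸ m) (socle A m) :=
  (socle_isTorsionBySet A m).module

/-- The socle of `A` at `m` is one-dimensional over the residue field `A/m`. -/
def SocleOneDim (A : Type*) [CommRing A] (m : Ideal A) : Prop :=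
  @Module.finrank (A ⧸ m) (socle A m) _ _ (socleModule A m) = 1

/-- `R = P/I` is locally Gorenstein: every local factor `R/q_i` is a Gorenstein local
ring, i.e. its socle is one-dimensional over the residue field. -/
def IsLocallyGorenstein (I : Ideal (MvPolynomial (Fin n) K)) : Prop :=
  ∀ (s : ℕ) (Q : Fin s → Ideal (MvPolynomial (Fin n) K)), IsPrimaryDecomp K I Q →
    ∀ i, SocleOneDim ((MvPolynomial (Fin n) K ⧸ I) ⧸ qR K I Q i)
      ((mR K I Q i).map (Ideal.Quotient.mk (qR K I Q i)))

/-- The degree form ideal `DF(I)`, generated by the degree forms (top degree homogeneous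
components) of the nonzero elements of `I`; one has `gr_F(R) ≅ P/DF(I)`. -/
noncomputable def DF (I : Ideal (MvPolynomial (Fin n) K)) :
    Ideal (MvPolynomial (Fin n) K) :=
  Ideal.span {g | ∃ f ∈ I, f ≠ (0 : MvPolynomial (Fin n) K) ∧
    g = homogeneousComponent f.totalDegree f}

/-- The maximal ideal of the graded local ring `gr_F(R) ≅ P/DF(I)`: the image of the
irrelevant ideal `⟨x_1,…,x_n⟩`. -/
noncomputable def grMaxIdeal (I : Ideal (MvPolynomial (Fin n) K)) :
    Ideal (MvPolynomial (Fin n) K ⧸ DF K I) :=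
  (Ideal.span (Set.range (X : Fin n → MvPolynomial (Fin n) K))).map
    (Ideal.Quotient.mk (DF K I))

/-- `R` is a strict Gorenstein ring: the socle of `gr_F(R) ≅ P/DF(I)` is one-dimensional
over `K`. -/
def IsStrictGorenstein (I : Ideal (MvPolynomial (Fin n) K)) : Prop :=
  Module.finrank K
    ((socle (MvPolynomial (Fin n) K ⧸ DF K I) (grMaxIdeal K I)).restrictScalars K) = 1

/-- The extension ideal `I·L[x_1,…,x_n]`, so that `R ⊗_K L = L[x_1,…,x_n]/I·L[x_1,…,x_n]`. -/
noncomputable def extIdeal (L : Type*) [Field L] [Algebra K L]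
    (I : Ideal (MvPolynomial (Fin n) K)) : Ideal (MvPolynomial (Fin n) L) :=
  I.map (MvPolynomial.map (algebraMap K L))

/-- The affine Hilbert function of `R` is symmetric:
`ΔHF^a_R(ri(R)−i) = ΔHF^a_R(i)` for all `i ∈ ℤ`. -/
def SymmetricHF (I : Ideal (MvPolynomial (Fin n) K)) : Prop :=
  ∀ i : ℤ, (aHF K I (ri K I - i) : ℤ) - aHF K I (ri K I - i - 1)
    = (aHF K I i : ℤ) - aHF K I (i - 1)

/-- `Ann_R(φ) = {0}` for `φ ∈ ω_R`. -/
def AnnZero (I : Ideal (MvPolynomial (Fin n) K))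
    (φ : Module.Dual K (MvPolynomial (Fin n) K ⧸ I)) : Prop :=
  ∀ f : MvPolynomial (Fin n) K ⧸ I, dAct K I f φ = 0 → f = 0

/-- `φ` generates `ω_R` as an `R`-module: `ω_R = ⟨φ⟩`. -/
def GeneratesDual (I : Ideal (MvPolynomial (Fin n) K))
    (φ : Module.Dual K (MvPolynomial (Fin n) K ⧸ I)) : Prop :=
  ∀ ψ : Module.Dual K (MvPolynomial (Fin n) K ⧸ I),
    ∃ f : MvPolynomial (Fin n) K ⧸ I, ψ = dAct K I f φ

/-- The `i`-th socle space `S_i ⊆ R`: the preimage under the decomposition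
`R ≅ R/q_1 × … × R/q_s` of `{0} × … × Soc(R/q_i) × … × {0}`. -/
noncomputable def socSpace (I : Ideal (MvPolynomial (Fin n) K)) {s : ℕ}
    (Q : Fin s → Ideal (MvPolynomial (Fin n) K)) (i : Fin s) :
    Ideal (MvPolynomial (Fin n) K ⧸ I) :=
  ((socle ((MvPolynomial (Fin n) K ⧸ I) ⧸ qR K I Q i)
        ((mR K I Q i).map (Ideal.Quotient.mk (qR K I Q i)))).comap
      (Ideal.Quotient.mk (qR K I Q i))) ⊓
    ⨅ j ≠ i, qR K I Q j

end CB

universe u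

namespace CB

variable {K : Type u} [Field K] {n : ℕ}

section AuxGeneral

lemma aux_prod_eq_inf {A : Type*} [CommRing A] {ι : Type*} (t : Finset ι) (g : ι → Ideal A) :
    (∀ j ∈ t, ∀ k ∈ t, j ≠ k → g j ⊔ g k = ⊤) → ∏ j ∈ t, g j = t.inf g := by
  classical
  induction t using Finset.induction_on with
  | empty => simp
  | @insert a t0 ha ih =>
    intro h
    rw [Finset.prod_insert ha, Finset.inf_insert,
      Ideal.mul_eq_inf_of_coprime
        (Ideal.sup_prod_eq_top fun j hj =>
          h a (Finset.mem_insert_self _ _) j (Finset.mem_insert_of_mem hj)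
            fun haj => ha (haj ▸ hj)),
      ih fun j hj k hk hjk =>
        h j (Finset.mem_insert_of_mem hj) k (Finset.mem_insert_of_mem hk) hjk]

lemma aux_finrank_span_singleton {A : Type*} [CommRing A] [Algebra K A] (f : A) :
    Module.finrank K ((Ideal.span {f}).restrictScalars K)
      = Module.finrank K (A ⧸ Submodule.colon (⊥ : Ideal A) (Ideal.span {f})) := by
  have hker : LinearMap.ker (LinearMap.toSpanSingleton A A f)
      = Submodule.colon (⊥ : Ideal A) (Ideal.span {f}) := by
    ext g
    rw [LinearMap.mem_ker, Ideal.mem_colon_span_singleton, Ideal.mem_bot,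
      LinearMap.toSpanSingleton_apply, smul_eq_mul]
  have hrange : LinearMap.range (LinearMap.toSpanSingleton A A f)
      = (Ideal.span {f} : Ideal A) := (LinearMap.span_singleton_eq_range A A f).symm
  have e : (A ⧸ Submodule.colon (⊥ : Ideal A) (Ideal.span {f})) ≃ₗ[A]
      ((Ideal.span {f}).restrictScalars K) :=
    (Submodule.quotEquivOfEq _ _ hker.symm).trans <|
      (LinearMap.toSpanSingleton A A f).quotKerEquivRange.trans <|
        (LinearEquiv.ofEq _ _ hrange).trans
          (Submodule.restrictScalarsEquiv K A A (Ideal.span {f})).symm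
  exact ((e.restrictScalars K).finrank_eq).symm

end AuxGeneral

section AuxMain

variable {s : ℕ} {I : Ideal (MvPolynomial (Fin n) K)}
  {Q : Fin s → Ideal (MvPolynomial (Fin n) K)}

lemma aux_I_le (hQ : IsPrimaryDecomp K I Q) (j : Fin s) : I ≤ Q j :=
  hQ.2.1.le.trans (iInf_le Q j)

lemma aux_mem_qR (hQ : IsPrimaryDecomp K I Q) (j : Fin s) (a : MvPolynomial (Fin n) K) :
    Ideal.Quotient.mk I a ∈ qR K I Q j ↔ a ∈ Q j :=
  Ideal.mem_quotient_iff_mem (aux_I_le hQ j)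

lemma aux_mem_mR (hQ : IsPrimaryDecomp K I Q) (j : Fin s) (a : MvPolynomial (Fin n) K) :
    Ideal.Quotient.mk I a ∈ mR K I Q j ↔ a ∈ (Q j).radical :=
  Ideal.mem_quotient_iff_mem ((aux_I_le hQ j).trans Ideal.le_radical)

lemma aux_rad (hQ : IsPrimaryDecomp K I Q) (j : Fin s) :
    (qR K I Q j).radical = mR K I Q j := by
  ext x
  obtain ⟨a, rfl⟩ := Ideal.Quotient.mk_surjective x
  rw [aux_mem_mR hQ j a, Ideal.mem_radical_iff, Ideal.mem_radical_iff]
  constructor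
  · rintro ⟨k, hk⟩
    exact ⟨k, (aux_mem_qR hQ j _).mp (by rwa [← map_pow] at hk)⟩
  · rintro ⟨k, hk⟩
    exact ⟨k, by rw [← map_pow]; exact (aux_mem_qR hQ j _).mpr hk⟩

lemma aux_primary (hQ : IsPrimaryDecomp K I Q) (j : Fin s) : (qR K I Q j).IsPrimary := by
  rw [Ideal.isPrimary_iff]
  have hQj := Ideal.isPrimary_iff.mp (hQ.1 j)
  constructor
  · intro htop
    apply hQj.1
    rw [Ideal.eq_top_iff_one]
    have h1 : Ideal.Quotient.mk I 1 ∈ qR K I Q j := by rw [htop]; trivial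
    exact (aux_mem_qR hQ j 1).mp h1
  · intro x y hxy
    obtain ⟨a, rfl⟩ := Ideal.Quotient.mk_surjective x
    obtain ⟨b, rfl⟩ := Ideal.Quotient.mk_surjective y
    rw [← map_mul] at hxy
    rcases hQj.2 ((aux_mem_qR hQ j _).mp hxy) with h | h
    · exact Or.inl ((aux_mem_qR hQ j a).mpr h)
    · exact Or.inr (by rw [aux_rad hQ j]; exact (aux_mem_mR hQ j b).mpr h)

lemma aux_inf_eq_bot (hQ : IsPrimaryDecomp K I Q) : (⨅ j, qR K I Q j) = ⊥ := by
  ext x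
  obtain ⟨a, rfl⟩ := Ideal.Quotient.mk_surjective x
  rw [Ideal.mem_iInf, Ideal.mem_bot]
  constructor
  · intro h
    rw [Ideal.Quotient.eq_zero_iff_mem, hQ.2.1, Ideal.mem_iInf]
    exact fun j => (aux_mem_qR hQ j a).mp (h j)
  · intro h j
    rw [Ideal.Quotient.eq_zero_iff_mem] at h
    exact (aux_mem_qR hQ j a).mpr (aux_I_le hQ j h)

lemma aux_max [FiniteDimensional K (MvPolynomial (Fin n) K ⧸ I)]
    (hQ : IsPrimaryDecomp K I Q) (j : Fin s) : (mR K I Q j).IsMaximal := by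
  haveI : IsArtinianRing (MvPolynomial (Fin n) K ⧸ I) :=
    IsArtinianRing.of_finite K (MvPolynomial (Fin n) K ⧸ I)
  have hp : (mR K I Q j).IsPrime := aux_rad hQ j ▸ Ideal.isPrime_radical (aux_primary hQ j)
  exact @IsArtinianRing.isMaximal_of_isPrime _ _ _ hp _

lemma aux_mR_ne (hQ : IsPrimaryDecomp K I Q) {j k : Fin s} (hjk : j ≠ k) :
    mR K I Q j ≠ mR K I Q k := by
  intro h
  apply hjk
  apply hQ.2.2
  have hc : ∀ l, Ideal.comap (Ideal.Quotient.mk I) (mR K I Q l) = (Q l).radical := by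
    intro l
    ext a
    rw [Ideal.mem_comap]
    exact aux_mem_mR hQ l a
  show (Q j).radical = (Q k).radical
  rw [← hc j, ← hc k, h]

lemma aux_sup_eq_top [FiniteDimensional K (MvPolynomial (Fin n) K ⧸ I)]
    (hQ : IsPrimaryDecomp K I Q) {j k : Fin s} (hjk : j ≠ k) :
    qR K I Q j ⊔ qR K I Q k = ⊤ := by
  have hm : mR K I Q j ⊔ mR K I Q k = ⊤ :=
    (aux_max hQ j).coprime_of_ne (aux_max hQ k) (aux_mR_ne hQ hjk)
  rw [← Ideal.radical_eq_top, eq_top_iff, ← hm]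
  exact sup_le
    (le_trans (le_of_eq (aux_rad hQ j).symm) (Ideal.radical_mono le_sup_left))
    (le_trans (le_of_eq (aux_rad hQ k).symm) (Ideal.radical_mono le_sup_right))

end AuxMain

section Abstract

variable {A : Type u} [CommRing A] [Algebra K A]

lemma abs_zero {s : ℕ} {q : Fin s → Ideal A} (hinf : (⨅ j, q j) = ⊥)
    (g : A) (hg : ∀ j, g ∈ q j) : g = 0 := by
  have hm : g ∈ (⨅ j, q j) := Ideal.mem_iInf.mpr hg
  rwa [hinf, Ideal.mem_bot] at hm

lemma abs_ann (f g : A) :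
    g ∈ Submodule.colon (⊥ : Ideal A) (Ideal.span {f}) ↔ g * f = 0 := by
  rw [Ideal.mem_colon_span_singleton, Ideal.mem_bot]

lemma abs_soc (qi mi : Ideal A) (x : A) :
    (Ideal.Quotient.mk qi x ∈ socle (A ⧸ qi) (mi.map (Ideal.Quotient.mk qi)))
      ↔ ∀ g ∈ mi, x * g ∈ qi := by
  show _ ∈ Submodule.colon (⊥ : Ideal (A ⧸ qi)) _ ↔ _
  rw [Submodule.mem_colon]
  constructor
  · intro h g hg
    have h2 := h _ (Ideal.mem_map_of_mem _ hg)
    rwa [smul_eq_mul, ← map_mul, Submodule.mem_bot,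
      Ideal.Quotient.eq_zero_iff_mem] at h2
  · intro h p hp
    obtain ⟨g, hg, rfl⟩ :=
      Ideal.mem_map_iff_of_surjective _ Ideal.Quotient.mk_surjective |>.mp hp
    rw [smul_eq_mul, ← map_mul, Submodule.mem_bot, Ideal.Quotient.eq_zero_iff_mem]
    exact h g hg

lemma abs_42 {s : ℕ} (q m : Fin s → Ideal A) (i : Fin s) (f : A)
    (hprim : ∀ j, (q j).IsPrimary)
    (hrad : ∀ j, (q j).radical = m j)
    (hinf : (⨅ j, q j) = ⊥) :
    ((Ideal.Quotient.mk (q i) f ≠ 0 ∧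
      Ideal.Quotient.mk (q i) f ∈
        socle (A ⧸ q i) ((m i).map (Ideal.Quotient.mk (q i)))) ∧
    ∀ j, j ≠ i → Ideal.Quotient.mk (q j) f = 0) → (Submodule.colon (⊥ : Ideal A) (Ideal.span {f}) = m i) := by
  have hzero : ∀ g : A, (∀ j, g ∈ q j) → g = 0 := abs_zero hinf
  have hAnn : ∀ g : A,
      g ∈ Submodule.colon (⊥ : Ideal A) (Ideal.span {f}) ↔ g * f = 0 := abs_ann f
  have hsoc : ∀ x : A,
      (Ideal.Quotient.mk (q i) x ∈
          socle (A ⧸ q i) ((m i).map (Ideal.Quotient.mk (q i))))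
        ↔ ∀ g ∈ m i, x * g ∈ q i := abs_soc (q i) (m i)
  rintro ⟨⟨hne, hsocmem⟩, hqj⟩
  have hfqi : f ∉ q i := fun h => hne (Ideal.Quotient.eq_zero_iff_mem.mpr h)
  have hfq : ∀ j, j ≠ i → f ∈ q j := fun j hj =>
    Ideal.Quotient.eq_zero_iff_mem.mp (hqj j hj)
  apply le_antisymm
  · intro g hg
    rw [hAnn] at hg
    have hfg : f * g ∈ q i := by
      rw [mul_comm, hg]; exact zero_mem _
    rcases (Ideal.isPrimary_iff.mp (hprim i)).2 hfg with h | h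
    · exact absurd h hfqi
    · rwa [hrad i] at h
  · intro g hg
    rw [hAnn]
    apply hzero
    intro j
    by_cases hj : j = i
    · subst hj
      rw [mul_comm]
      exact (hsoc f).mp hsocmem g hg
    · exact Ideal.mul_mem_left _ g (hfq j hj)

lemma abs_24 {s : ℕ} (q m : Fin s → Ideal A) (i : Fin s) (f : A)
    (hprim : ∀ j, (q j).IsPrimary)
    (hrad : ∀ j, (q j).radical = m j)
    (hinf : (⨅ j, q j) = ⊥)
    (hmax : ∀ j, (m j).IsMaximal)
    (hne : ∀ {j k : Fin s}, j ≠ k → m j ≠ m k) :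
    (Submodule.colon (⊥ : Ideal A) (Ideal.span {f}) = m i) → ((Ideal.Quotient.mk (q i) f ≠ 0 ∧
      Ideal.Quotient.mk (q i) f ∈
        socle (A ⧸ q i) ((m i).map (Ideal.Quotient.mk (q i)))) ∧
    ∀ j, j ≠ i → Ideal.Quotient.mk (q j) f = 0) := by
  have hzero : ∀ g : A, (∀ j, g ∈ q j) → g = 0 := abs_zero hinf
  have hAnn : ∀ g : A,
      g ∈ Submodule.colon (⊥ : Ideal A) (Ideal.span {f}) ↔ g * f = 0 := abs_ann f
  have hsoc : ∀ x : A,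
      (Ideal.Quotient.mk (q i) x ∈
          socle (A ⧸ q i) ((m i).map (Ideal.Quotient.mk (q i))))
        ↔ ∀ g ∈ m i, x * g ∈ q i := abs_soc (q i) (m i)
  intro h2
  have hf0 : f ≠ 0 := by
    intro h0
    apply (hmax i).ne_top
    rw [← h2, eq_top_iff]
    intro g _
    rw [hAnn, h0, mul_zero]
  have hfq : ∀ j, j ≠ i → f ∈ q j := by
    intro j hj
    have hnle : ¬ m i ≤ m j := fun hle =>
      hne (show i ≠ j from fun e => hj e.symm)
        ((hmax i).eq_of_le (hmax j).ne_top hle)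
    obtain ⟨g, hgi, hgj⟩ := SetLike.not_le_iff_exists.mp hnle
    have hgf : g * f = 0 := by
      rw [← hAnn, h2]; exact hgi
    have hfg : f * g ∈ q j := by
      rw [mul_comm, hgf]; exact zero_mem _
    rcases (Ideal.isPrimary_iff.mp (hprim j)).2 hfg with h | h
    · exact h
    · exact absurd (by rwa [hrad j] at h) hgj
  have hfqi : f ∉ q i := by
    intro hfi
    apply hf0
    apply hzero
    intro j
    by_cases hj : j = i
    · subst hj; exact hfi
    · exact hfq j hj
  refine ⟨⟨fun h0 => hfqi (Ideal.Quotient.eq_zero_iff_mem.mp h0), ?_⟩,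
    fun j hj => Ideal.Quotient.eq_zero_iff_mem.mpr (hfq j hj)⟩
  rw [hsoc]
  intro g hg
  have hgf : g * f = 0 := by rw [← hAnn, h2]; exact hg
  rw [mul_comm, hgf]
  exact zero_mem _

lemma abs_quot_eq [FiniteDimensional K A] {N M' : Ideal A} (hle : N ≤ M')
    (hdim : Module.finrank K (A ⧸ N) = Module.finrank K (A ⧸ M')) : N = M' := by
  haveI : FiniteDimensional K (A ⧸ N) :=
    Module.Finite.of_surjective ((N.mkQ).restrictScalars K) (Submodule.mkQ_surjective _)
  have hle' : N ≤ Submodule.comap (LinearMap.id : A →ₗ[A] A) (M' : Submodule A A) := hle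
  set φ : (A ⧸ N) →ₗ[A] (A ⧸ (M' : Submodule A A)) :=
    Submodule.mapQ N _ (LinearMap.id : A →ₗ[A] A) hle' with hφ
  have hφs : Function.Surjective φ := by
    intro x
    obtain ⟨a, rfl⟩ := Submodule.Quotient.mk_surjective _ x
    exact ⟨Submodule.Quotient.mk a, by rw [hφ, Submodule.mapQ_apply]; rfl⟩
  have hφ's : Function.Surjective (φ.restrictScalars K) := hφs
  have h1 := LinearMap.finrank_range_add_finrank_ker (φ.restrictScalars K)
  rw [LinearMap.range_eq_top.mpr hφ's, finrank_top, ← hdim] at h1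
  have hker0 : Module.finrank K (LinearMap.ker (φ.restrictScalars K)) = 0 := by omega
  have hkerbot : LinearMap.ker (φ.restrictScalars K) = ⊥ :=
    Submodule.finrank_eq_zero.mp hker0
  refine le_antisymm hle fun x hx => ?_
  have hφx : (φ.restrictScalars K) (Submodule.Quotient.mk x) = 0 := by
    show φ _ = 0
    rw [hφ, Submodule.mapQ_apply]
    exact (Submodule.Quotient.mk_eq_zero _).mpr hx
  have hxker : Submodule.Quotient.mk x ∈ LinearMap.ker (φ.restrictScalars K) := hφx
  rw [hkerbot, Submodule.mem_bot] at hxker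
  exact (Submodule.Quotient.mk_eq_zero N).mp hxker

lemma abs_12 [FiniteDimensional K A] {s : ℕ} (q m : Fin s → Ideal A) (i : Fin s) (f : A)
    (hprim : ∀ j, (q j).IsPrimary)
    (hrad : ∀ j, (q j).radical = m j)
    (hinf : (⨅ j, q j) = ⊥)
    (hmax : ∀ j, (m j).IsMaximal) :
    (Module.finrank K ((Ideal.span {f}).restrictScalars K) = Module.finrank K (A ⧸ m i) ∧
      ∀ j, j ≠ i → f ∈ q j) →
    (Submodule.colon (⊥ : Ideal A) (Ideal.span {f}) = m i) := by
  have hzero : ∀ g : A, (∀ j, g ∈ q j) → g = 0 := abs_zero hinf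
  have hAnn : ∀ g : A,
      g ∈ Submodule.colon (⊥ : Ideal A) (Ideal.span {f}) ↔ g * f = 0 := abs_ann f
  rintro ⟨hdim, hmem⟩
  haveI : Nontrivial (A ⧸ m i) := Ideal.Quotient.nontrivial_iff.mpr (hmax i).ne_top
  haveI : FiniteDimensional K (A ⧸ m i) :=
    Module.Finite.of_surjective (((m i).mkQ).restrictScalars K) (Submodule.mkQ_surjective _)
  have hpos : 0 < Module.finrank K (A ⧸ m i) := Module.finrank_pos
  have hf0 : f ≠ 0 := by
    intro h0
    rw [h0] at hdim
    rw [Ideal.span_singleton_eq_bot.mpr rfl] at hdim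
    rw [Submodule.restrictScalars_bot, finrank_bot] at hdim
    omega
  have hfqi : f ∉ q i := by
    intro h
    apply hf0
    apply hzero
    intro j
    by_cases hj : j = i
    · subst hj; exact h
    · exact hmem j hj
  have hAnnle : Submodule.colon (⊥ : Ideal A) (Ideal.span {f}) ≤ m i := by
    intro g hg
    rw [hAnn] at hg
    have hfg : f * g ∈ q i := by rw [mul_comm, hg]; exact zero_mem _
    rcases (Ideal.isPrimary_iff.mp (hprim i)).2 hfg with h | h
    · exact absurd h hfqi
    · rwa [hrad i] at h
  exact abs_quot_eq hAnnle
    (by rw [← aux_finrank_span_singleton (K := K) f]; exact hdim)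

lemma abs_43 [FiniteDimensional K A] {s : ℕ} (q m : Fin s → Ideal A) (i : Fin s) (f : A)
    (hprim : ∀ j, (q j).IsPrimary)
    (hrad : ∀ j, (q j).radical = m j)
    (hinf : (⨅ j, q j) = ⊥)
    (hmax : ∀ j, (m j).IsMaximal)
    (hne : ∀ {j k : Fin s}, j ≠ k → m j ≠ m k) :
    ((Ideal.Quotient.mk (q i) f ≠ 0 ∧
      Ideal.Quotient.mk (q i) f ∈
        socle (A ⧸ q i) ((m i).map (Ideal.Quotient.mk (q i)))) ∧
    ∀ j, j ≠ i → Ideal.Quotient.mk (q j) f = 0) → (f ≠ 0 ∧ f ∈ Submodule.colon (q i) (m i) * ∏ j ∈ Finset.univ.erase i, q j) := by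
  have hsup : ∀ {j k : Fin s}, j ≠ k → q j ⊔ q k = ⊤ := by
    intro j k hjk
    have hm : m j ⊔ m k = ⊤ :=
      (hmax j).coprime_of_ne (hmax k) (hne hjk)
    rw [← Ideal.radical_eq_top, eq_top_iff, ← hm]
    exact sup_le
      (le_trans (le_of_eq (hrad j).symm) (Ideal.radical_mono le_sup_left))
      (le_trans (le_of_eq (hrad k).symm) (Ideal.radical_mono le_sup_right))
  have hzero : ∀ g : A, (∀ j, g ∈ q j) → g = 0 := abs_zero hinf
  have hAnn : ∀ g : A,
      g ∈ Submodule.colon (⊥ : Ideal A) (Ideal.span {f}) ↔ g * f = 0 := abs_ann f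
  have hsoc : ∀ x : A,
      (Ideal.Quotient.mk (q i) x ∈
          socle (A ⧸ q i) ((m i).map (Ideal.Quotient.mk (q i))))
        ↔ ∀ g ∈ m i, x * g ∈ q i := abs_soc (q i) (m i)
  rintro ⟨⟨hne, hsocmem⟩, hqj⟩
  have hfq : ∀ j, j ≠ i → f ∈ q j := fun j hj =>
    Ideal.Quotient.eq_zero_iff_mem.mp (hqj j hj)
  have hfqi : f ∉ q i := fun h => hne (Ideal.Quotient.eq_zero_iff_mem.mpr h)
  refine ⟨fun h0 => hfqi (h0 ▸ zero_mem _), ?_⟩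
  have hcolon : f ∈ Submodule.colon (q i) (m i) := by
    rw [Submodule.mem_colon]
    intro g hg
    rw [smul_eq_mul]
    exact (hsoc f).mp hsocmem g hg
  have hqle : q i ≤ Submodule.colon (q i) (m i) := by
    intro x hx
    rw [Submodule.mem_colon]
    intro p _
    rw [smul_eq_mul]
    exact Ideal.mul_mem_right p _ hx
  have hcop : ∀ j ∈ Finset.univ.erase i,
      Submodule.colon (q i) (m i) ⊔ q j = ⊤ := by
    intro j hj
    have hij : (i : Fin s) ≠ j := (Finset.ne_of_mem_erase hj).symm
    rw [eq_top_iff, ← hsup hij]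
    exact sup_le (le_trans hqle le_sup_left) le_sup_right
  rw [Ideal.mul_eq_inf_of_coprime (Ideal.sup_prod_eq_top hcop),
    aux_prod_eq_inf _ _ (fun j _ k _ hjk => hsup hjk)]
  exact Submodule.mem_inf.mpr ⟨hcolon,
    Submodule.mem_finsetInf.mpr fun j hj => hfq j (Finset.mem_erase.mp hj).1⟩

lemma abs_34 {s : ℕ} (q m : Fin s → Ideal A) (i : Fin s) (f : A)
    (hprim : ∀ j, (q j).IsPrimary)
    (hrad : ∀ j, (q j).radical = m j)
    (hinf : (⨅ j, q j) = ⊥) :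
    (f ≠ 0 ∧ f ∈ Submodule.colon (q i) (m i) * ∏ j ∈ Finset.univ.erase i, q j) → ((Ideal.Quotient.mk (q i) f ≠ 0 ∧
      Ideal.Quotient.mk (q i) f ∈
        socle (A ⧸ q i) ((m i).map (Ideal.Quotient.mk (q i)))) ∧
    ∀ j, j ≠ i → Ideal.Quotient.mk (q j) f = 0) := by
  have hzero : ∀ g : A, (∀ j, g ∈ q j) → g = 0 := abs_zero hinf
  have hAnn : ∀ g : A,
      g ∈ Submodule.colon (⊥ : Ideal A) (Ideal.span {f}) ↔ g * f = 0 := abs_ann f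
  have hsoc : ∀ x : A,
      (Ideal.Quotient.mk (q i) x ∈
          socle (A ⧸ q i) ((m i).map (Ideal.Quotient.mk (q i))))
        ↔ ∀ g ∈ m i, x * g ∈ q i := abs_soc (q i) (m i)
  rintro ⟨hf0, hmem⟩
  have h1 : f ∈ Submodule.colon (q i) (m i) := Ideal.mul_le_left hmem
  have h2 : f ∈ ∏ j ∈ Finset.univ.erase i, q j := Ideal.mul_le_right hmem
  have hfq : ∀ j, j ≠ i → f ∈ q j := fun j hj =>
    Submodule.mem_finsetInf.mp (Ideal.prod_le_inf h2) j
      (Finset.mem_erase.mpr ⟨hj, Finset.mem_univ j⟩)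
  have hfqi : f ∉ q i := by
    intro h
    apply hf0
    apply hzero
    intro j
    by_cases hj : j = i
    · subst hj; exact h
    · exact hfq j hj
  refine ⟨⟨fun h0 => hfqi (Ideal.Quotient.eq_zero_iff_mem.mp h0), ?_⟩,
    fun j hj => Ideal.Quotient.eq_zero_iff_mem.mpr (hfq j hj)⟩
  rw [hsoc]
  intro g hg
  have := Submodule.mem_colon.mp h1 g hg
  rwa [smul_eq_mul] at this

lemma stmt_abstract [FiniteDimensional K A] {s : ℕ} (q m : Fin s → Ideal A) (i : Fin s) (f : A)
    (hprim : ∀ j, (q j).IsPrimary)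
    (hrad : ∀ j, (q j).radical = m j)
    (hinf : (⨅ j, q j) = ⊥)
    (hmax : ∀ j, (m j).IsMaximal)
    (hne : ∀ {j k : Fin s}, j ≠ k → m j ≠ m k) :
    List.TFAE [
      Module.finrank K ((Ideal.span {f}).restrictScalars K) = Module.finrank K (A ⧸ m i) ∧ ∀ j, j ≠ i → f ∈ q j,
      Submodule.colon (⊥ : Ideal A) (Ideal.span {f}) = m i,
      f ≠ 0 ∧ f ∈ Submodule.colon (q i) (m i) * ∏ j ∈ Finset.univ.erase i, q j,
      (Ideal.Quotient.mk (q i) f ≠ 0 ∧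
      Ideal.Quotient.mk (q i) f ∈
        socle (A ⧸ q i) ((m i).map (Ideal.Quotient.mk (q i)))) ∧
    ∀ j, j ≠ i → Ideal.Quotient.mk (q j) f = 0] := by
  tfae_have h42 : 4 → 2 := abs_42 q m i f hprim hrad hinf
  tfae_have h24 : 2 → 4 := abs_24 q m i f hprim hrad hinf hmax hne
  tfae_have h21 : 2 → 1 := by
    intro h2
    constructor
    · rw [aux_finrank_span_singleton (K := K) f, h2]
    · intro j hj
      exact Ideal.Quotient.eq_zero_iff_mem.mp ((h24 h2).2 j hj)
  tfae_have h12 : 1 → 2 := abs_12 (K := K) q m i f hprim hrad hinf hmax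
  tfae_have h43 : 4 → 3 := abs_43 (K := K) q m i f hprim hrad hinf hmax hne
  tfae_have h34 : 3 → 4 := abs_34 q m i f hprim hrad hinf
  tfae_finish

end Abstract

theorem stmt_1 {s : ℕ} (I : Ideal (MvPolynomial (Fin n) K))
    [FiniteDimensional K (MvPolynomial (Fin n) K ⧸ I)]
    (Q : Fin s → Ideal (MvPolynomial (Fin n) K)) (hQ : IsPrimaryDecomp K I Q)
    (i : Fin s) (f : MvPolynomial (Fin n) K ⧸ I) :
    List.TFAE [
      IsSeparator K I Q i f,
      Submodule.colon (⊥ : Ideal (MvPolynomial (Fin n) K ⧸ I)) (Ideal.span {f})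
        = mR K I Q i,
      f ≠ 0 ∧ f ∈ Submodule.colon (qR K I Q i) (mR K I Q i) *
        ∏ j ∈ Finset.univ.erase i, qR K I Q j,
      (Ideal.Quotient.mk (qR K I Q i) f ≠ 0 ∧
          Ideal.Quotient.mk (qR K I Q i) f ∈
            socle ((MvPolynomial (Fin n) K ⧸ I) ⧸ qR K I Q i)
              ((mR K I Q i).map (Ideal.Quotient.mk (qR K I Q i)))) ∧
        ∀ j, j ≠ i → Ideal.Quotient.mk (qR K I Q j) f = 0] := by
  haveI := hQ
  unfold IsSeparator
  exact stmt_abstract (qR K I Q) (mR K I Q) i f (aux_primary hQ) (aux_rad hQ)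
    (aux_inf_eq_bot hQ) (aux_max hQ) (fun {j k} hjk => aux_mR_ne hQ hjk)

end CB
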